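/- Let $\pi_1,\pi_2$ be compatible Poisson bivectors, and let $f_0,f_1,\ldots$ and $g_0,g_1,\ldots$ be two Magri--Lenard chains, i.e., sequences satisfying $\pi_1(f_0)=0$ and $\pi_1(f_{i+1})+\pi_2(f_i)=0$ for all $i\geq 0$ (similarly for the $g_j$). Then for all $i,j$ the Poisson bracket $\{f_i,g_j\}_{\lambda_1\pi_1+\lambda_2\pi_2} = 0$ for any $\lambda_1,\lambda_2$; in particular $\{f_i,g_j\}_{\pi_1}=0$ and $\{f_i,g_j\}_{\pi_2}=0$. -/
import Mathlib


open scoped BigOperators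

/-- Let `π₁, π₂` be compatible Poisson bivectors, and `f₀,f₁,…` and `g₀,g₁,…`
two Magri–Lenard chains: `π₁(f₀) = 0` and `π₁(f_{i+1}) + π₂(f_i) = 0` for all `i` (and
similarly for the `g_j`).  Then for all `i, j` the Poisson bracket
`{f_i,g_j}_{λ₁π₁+λ₂π₂} = 0` for any `λ₁, λ₂`; in particular `{f_i,g_j}_{π₁} = 0` and
`{f_i,g_j}_{π₂} = 0`.

The algebra of functions is modelled as a commutative `ℝ`-algebra `A` with two bilinear
brackets `B1, B2` that are antisymmetric, satisfy Leibniz and Jacobi, and are compatible;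
`πₖ(f) = 0` is expressed as `Bk f h = 0` for all `h`. -/
theorem magri_lenard_chains_involutive
    (A : Type*) [CommRing A] [Algebra ℝ A]
    (B1 B2 : A →ₗ[ℝ] A →ₗ[ℝ] A)
    (hskew1 : ∀ f g, B1 f g = -B1 g f)
    (hskew2 : ∀ f g, B2 f g = -B2 g f)
    (hLeib1 : ∀ f g h, B1 f (g * h) = g * B1 f h + B1 f g * h)
    (hLeib2 : ∀ f g h, B2 f (g * h) = g * B2 f h + B2 f g * h)
    (hJac1 : ∀ f g h, B1 f (B1 g h) + B1 g (B1 h f) + B1 h (B1 f g) = 0)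
    (hJac2 : ∀ f g h, B2 f (B2 g h) + B2 g (B2 h f) + B2 h (B2 f g) = 0)
    (hcompat : ∀ f g h,
      B1 f (B2 g h) + B2 f (B1 g h) + B1 g (B2 h f) + B2 g (B1 h f)
        + B1 h (B2 f g) + B2 h (B1 f g) = 0)
    (f g : ℕ → A)
    (hf0 : ∀ h, B1 (f 0) h = 0)
    (hfrec : ∀ i h, B1 (f (i + 1)) h + B2 (f i) h = 0)
    (hg0 : ∀ h, B1 (g 0) h = 0)
    (hgrec : ∀ j h, B1 (g (j + 1)) h + B2 (g j) h = 0) :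
    ∀ (i j : ℕ) (l₁ l₂ : ℝ),
      l₁ • B1 (f i) (g j) + l₂ • B2 (f i) (g j) = 0 := by
  have key : ∀ i j, B1 (f i) (g j) = 0 := by
    intro i
    induction i with
    | zero => intro j; exact hf0 (g j)
    | succ i ih =>
      intro j
      have h1 : B1 (f (i + 1)) (g j) = -B2 (f i) (g j) := by
        linear_combination hfrec i (g j)
      have h2 : B1 (g (j + 1)) (f i) = -B2 (g j) (f i) := by
        linear_combination hgrec j (f i)
      calc B1 (f (i + 1)) (g j) = -B2 (f i) (g j) := h1
        _ = B2 (g j) (f i) := by rw [hskew2 (f i) (g j)]; ring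
        _ = -B1 (g (j + 1)) (f i) := by rw [h2]; ring
        _ = B1 (f i) (g (j + 1)) := by rw [hskew1 (g (j+1)) (f i)]; ring
        _ = 0 := ih (j + 1)
  intro i j l₁ l₂
  have h2 : B2 (f i) (g j) = 0 := by
    have h := hfrec i (g j)
    rw [key (i + 1) j, zero_add] at h
    exact h
  rw [key i j, h2, smul_zero, smul_zero, add_zero]
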